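/- Let A be a connected Γ-graded bialgebra with finite-dimensional homogeneous components, and let B denote its graded dual (also a connected Γ-graded bialgebra). Let ⟨·,·⟩ : A × B → k be the duality pairing. If a and b are ordered monomials in A and B respectively, then ⟨a, b⟩ = 0 unless Pol^∧(a) = Pol^∧(b). -/

import Mathlib

open scoped TensorProduct
open TensorProduct

noncomputable section

namespace MVPaper

variable {k A : Type} [Field k] [Ring A] [Bialgebra k A]
variable {ι : Type} [AddCommMonoid ι] [DecidableEq ι]
variable (𝒜 : ι → Submodule k A) [DirectSum.Decomposition 𝒜]

/-- The projection of `A` onto its degree-`γ` homogeneous component. -/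
def proj (γ : ι) : A →ₗ[k] A :=
  (𝒜 γ).subtype ∘ₗ (DirectSum.component k ι (fun i => 𝒜 i) γ) ∘ₗ
    (DirectSum.decomposeLinearEquiv 𝒜).toLinearMap

/-- The projection of `A ⊗ A` onto its bidegree-`(β, γ)` homogeneous component. -/
def projT (β γ : ι) : A ⊗[k] A →ₗ[k] A ⊗[k] A :=
  TensorProduct.map (proj 𝒜 β) (proj 𝒜 γ)

/-- `L(a)`: the set of left degrees appearing in the coproduct of `a`. -/
def Lset (a : A) : Set ι :=
  {β | ∃ γ, projT 𝒜 β γ (Coalgebra.comul (R := k) a) ≠ 0}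

/-- `R(a)`: the set of right degrees appearing in the coproduct of `a`. -/
def Rset (a : A) : Set ι :=
  {γ | ∃ β, projT 𝒜 β γ (Coalgebra.comul (R := k) a) ≠ 0}

/-- The coproduct respects the grading. -/
def ComulGraded : Prop :=
  ∀ (γ : ι), ∀ a ∈ 𝒜 γ, ∀ β δ : ι, β + δ ≠ γ →
    projT 𝒜 β δ (Coalgebra.comul (R := k) a) = 0

/-- The coproduct of any element is the (finite) sum of its homogeneous components. -/
def ComulDecomposes : Prop :=
  ∀ a : A, ∃ S : Finset (ι × ι),
    Coalgebra.comul (R := k) a = ∑ p ∈ S, projT 𝒜 p.1 p.2 (Coalgebra.comul (R := k) a)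

/-- Connectedness: the degree-`0` component is spanned by the unit. -/
def GradedConnected : Prop := 𝒜 0 = Submodule.span k {(1 : A)}

end MVPaper

namespace MVPaper

variable {k A : Type} [Field k] [Ring A] [Bialgebra k A]
variable {Γ : AddSubmonoid (ℝ × ℝ)} [DecidableEq Γ]
variable (𝒜 : Γ → Submodule k A) [DirectSum.Decomposition 𝒜]

/-- `Γ` is contained in the right half-plane. -/
def HalfPlane (Γ : AddSubmonoid (ℝ × ℝ)) : Prop :=
  ∀ γ ∈ Γ, 0 < γ.1 ∨ (γ.1 = 0 ∧ 0 ≤ γ.2)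

/-- The slope `d/r` of a point `(r, d)` of the right half-plane, with `∞` for `r = 0`. -/
def slope (v : ℝ × ℝ) : WithTop ℝ :=
  if v.1 = 0 then ⊤ else (v.2 / v.1 : ℝ)

/-- Membership in `Γ_μ`. -/
def memSlope (μ : WithTop ℝ) (γ : Γ) : Prop :=
  (γ : ℝ × ℝ) = 0 ∨ slope (γ : ℝ × ℝ) = μ

/-- Membership in `Γ_{≤μ}`. -/
def memSlopeLE (μ : WithTop ℝ) (γ : Γ) : Prop :=
  (γ : ℝ × ℝ) = 0 ∨ slope (γ : ℝ × ℝ) ≤ μ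

/-- Membership in `Γ_{≥μ}`. -/
def memSlopeGE (μ : WithTop ℝ) (γ : Γ) : Prop :=
  (γ : ℝ × ℝ) = 0 ∨ μ ≤ slope (γ : ℝ × ℝ)

/-- `a` is a homogeneous semistable element of slope `μ` and degree `γ`. -/
def IsSemistableAt (μ : WithTop ℝ) (γ : Γ) (a : A) : Prop :=
  a ∈ 𝒜 γ ∧ memSlope μ γ ∧ ∀ β ∈ Lset 𝒜 a, memSlopeLE μ β

/-- `a` is a homogeneous semistable element of slope `μ`. -/
def IsSemistable (μ : WithTop ℝ) (a : A) : Prop :=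
  ∃ γ : Γ, IsSemistableAt 𝒜 μ γ a

/-- `A_μ`: the span of the homogeneous elements of slope `μ`. -/
def Aslope (μ : WithTop ℝ) : Submodule k A :=
  ⨆ γ ∈ {γ : Γ | memSlope μ γ}, 𝒜 γ

/-- `A_{[μ]}`: the span of the semistable elements of slope `μ`. -/
def Asemi (μ : WithTop ℝ) : Submodule k A :=
  Submodule.span k {a : A | IsSemistable 𝒜 μ a}

open Classical in
/-- The projection `p_μ : A → A_μ`. -/
def pSlope (μ : WithTop ℝ) : A →ₗ[k] A :=
  (DirectSum.toModule k Γ A fun γ => if memSlope μ γ then (𝒜 γ).subtype else 0) ∘ₗ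
    (DirectSum.decomposeLinearEquiv 𝒜).toLinearMap

/-- Ordered monomials whose factors have slopes in `J`: products of homogeneous
semistable elements of nonzero degree, with weakly decreasing slopes. -/
def IsOrderedMonomialIn (J : Set (WithTop ℝ)) (a : A) : Prop :=
  ∃ (p : ℕ) (g : Fin p → A) (γ : Fin p → Γ) (μ : Fin p → WithTop ℝ),
    (∀ i, IsSemistableAt 𝒜 (μ i) (γ i) (g i)) ∧
    (∀ i, (γ i : ℝ × ℝ) ≠ 0) ∧ (∀ i, μ i ∈ J) ∧
    Antitone μ ∧ a = (List.ofFn g).prod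

/-- Ordered monomials. -/
def IsOrderedMonomial (a : A) : Prop :=
  IsOrderedMonomialIn 𝒜 Set.univ a

/-- The points of `L(a)`, viewed in `ℝ²`. -/
def Lpts (a : A) : Set (ℝ × ℝ) :=
  (fun γ : Γ => (γ : ℝ × ℝ)) '' Lset 𝒜 a

/-- The polytope `Pol(a)`: the convex hull of `L(a)` in `ℝ²`. -/
def Pol (a : A) : Set (ℝ × ℝ) :=
  convexHull ℝ (Lpts 𝒜 a)

/-- `Pol^∧(a)` for `a` of degree `γ`: the region between the upper rim of `Pol(a)`
and the straight segment from `0` to `γ`. -/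
def PolWedge (a : A) (γ : Γ) : Set (ℝ × ℝ) :=
  {p | (∃ t ∈ Set.Icc (0 : ℝ) 1,
          p.1 = t * (γ : ℝ × ℝ).1 ∧ t * (γ : ℝ × ℝ).2 ≤ p.2) ∧
       (∃ q ∈ Pol 𝒜 a, q.1 = p.1 ∧ p.2 ≤ q.2)}

end MVPaper

namespace MVPaper

variable {k A B : Type} [Field k] [Ring A] [Bialgebra k A] [Ring B] [Bialgebra k B]

/-- The pairing on tensor squares induced by a pairing `π : A × B → k`:
`pair2 π (a₁ ⊗ a₂) (b₁ ⊗ b₂) = π a₁ b₁ * π a₂ b₂`. -/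
def pair2 (π : A →ₗ[k] Module.Dual k B) :
    (A ⊗[k] A) →ₗ[k] Module.Dual k (B ⊗[k] B) :=
  TensorProduct.dualDistrib k B B ∘ₗ TensorProduct.map π π

/-- `π` is a duality of graded bialgebras: it is graded, perfect componentwise, and
intertwines multiplication with comultiplication on both sides. -/
def IsGradedBialgebraPairing {Γ : AddSubmonoid (ℝ × ℝ)} [DecidableEq Γ]
    (𝒜 : Γ → Submodule k A) [DirectSum.Decomposition 𝒜]
    (ℬ : Γ → Submodule k B) [DirectSum.Decomposition ℬ]
    (π : A →ₗ[k] Module.Dual k B) : Prop :=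
  (∀ γ δ : Γ, γ ≠ δ → ∀ a ∈ 𝒜 γ, ∀ b ∈ ℬ δ, π a b = 0) ∧
  (∀ γ : Γ, ∀ a ∈ 𝒜 γ, (∀ b ∈ ℬ γ, π a b = 0) → a = 0) ∧
  (∀ γ : Γ, ∀ b ∈ ℬ γ, (∀ a ∈ 𝒜 γ, π a b = 0) → b = 0) ∧
  (∀ (a₁ a₂ : A) (b : B),
    π (a₁ * a₂) b = pair2 π (a₁ ⊗ₜ[k] a₂) (Coalgebra.comul (R := k) b)) ∧
  (∀ (a : A) (b₁ b₂ : B),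
    π a (b₁ * b₂) = pair2 π (Coalgebra.comul (R := k) a) (b₁ ⊗ₜ[k] b₂)) ∧
  (π 1 1 = 1)

end MVPaper

namespace MVPaper

variable {k A : Type} [Field k] [Ring A] [Bialgebra k A]
variable {ι : Type} [AddCommMonoid ι] [DecidableEq ι]
variable (𝒜 : ι → Submodule k A) [DirectSum.Decomposition 𝒜]

lemma proj_apply (γ : ι) (x : A) :
    proj 𝒜 γ x = (DirectSum.decompose 𝒜 x γ : A) := rfl

lemma proj_mem (γ : ι) (x : A) : proj 𝒜 γ x ∈ 𝒜 γ := by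
  rw [proj_apply]; exact (DirectSum.decompose 𝒜 x γ).2

lemma proj_of_mem_same {γ : ι} {x : A} (hx : x ∈ 𝒜 γ) : proj 𝒜 γ x = x := by
  rw [proj_apply]; exact DirectSum.decompose_of_mem_same 𝒜 hx

lemma proj_of_mem_ne {γ δ : ι} {x : A} (hx : x ∈ 𝒜 δ) (h : δ ≠ γ) : proj 𝒜 γ x = 0 := by
  rw [proj_apply]; exact DirectSum.decompose_of_mem_ne 𝒜 hx h

lemma mem_eq_of_ne_zero {γ δ : ι} {x : A} (hx : x ∈ 𝒜 γ) (hx' : x ∈ 𝒜 δ) (h : x ≠ 0) :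
    γ = δ := by
  by_contra hne
  exact h (by rw [← proj_of_mem_same 𝒜 hx, proj_of_mem_ne 𝒜 hx' (Ne.symm hne)])

lemma projT_tmul (β γ : ι) (x y : A) :
    projT 𝒜 β γ (x ⊗ₜ[k] y) = proj 𝒜 β x ⊗ₜ[k] proj 𝒜 γ y := rfl

/-- The subspace `𝒜 β ⊗ 𝒜 γ` of `A ⊗ A`. -/
def subM (β γ : ι) : Submodule k (A ⊗[k] A) :=
  Submodule.span k {z | ∃ x ∈ 𝒜 β, ∃ y ∈ 𝒜 γ, z = x ⊗ₜ[k] y}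

lemma projT_mem_subM (β γ : ι) (z : A ⊗[k] A) : projT 𝒜 β γ z ∈ subM 𝒜 β γ := by
  induction z with
  | zero => simp only [map_zero]; exact Submodule.zero_mem _
  | tmul x y =>
      rw [projT_tmul]
      exact Submodule.subset_span ⟨_, proj_mem 𝒜 β x, _, proj_mem 𝒜 γ y, rfl⟩
  | add u v hu hv => rw [map_add]; exact Submodule.add_mem _ hu hv

lemma projT_eq_of_mem_subM {β γ β' γ' : ι} {z : A ⊗[k] A} (hz : z ∈ subM 𝒜 β' γ') :
    projT 𝒜 β γ z = if β = β' ∧ γ = γ' then z else 0 := by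
  induction hz using Submodule.span_induction with
  | mem z hz =>
      obtain ⟨x, hx, y, hy, rfl⟩ := hz
      by_cases h1 : β = β'
      · subst h1
        by_cases h2 : γ = γ'
        · subst h2
          simp only [and_self, if_true, projT_tmul, proj_of_mem_same 𝒜 hx,
            proj_of_mem_same 𝒜 hy]
        · simp only [h2, and_false, if_false, projT_tmul, proj_of_mem_ne 𝒜 hy (Ne.symm h2),
            TensorProduct.tmul_zero]
      · simp only [h1, false_and, if_false, projT_tmul, proj_of_mem_ne 𝒜 hx (Ne.symm h1),
          TensorProduct.zero_tmul]
  | zero => simp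
  | add u v _ _ hu hv => rw [map_add, hu, hv]; split <;> simp
  | smul c u _ hu => rw [map_smul, hu]; split <;> simp

lemma projT_eq_zero_of_mem_subM {β γ β' γ' : ι} {z : A ⊗[k] A} (hz : z ∈ subM 𝒜 β' γ')
    (h : ¬(β = β' ∧ γ = γ')) : projT 𝒜 β γ z = 0 := by
  rw [projT_eq_of_mem_subM 𝒜 hz, if_neg h]

lemma mul_mem_subM [SetLike.GradedMonoid 𝒜] {β₁ γ₁ β₂ γ₂ : ι} {u v : A ⊗[k] A}
    (hu : u ∈ subM 𝒜 β₁ γ₁) (hv : v ∈ subM 𝒜 β₂ γ₂) :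
    u * v ∈ subM 𝒜 (β₁ + β₂) (γ₁ + γ₂) := by
  induction hu using Submodule.span_induction with
  | mem u hu =>
      obtain ⟨x₁, hx₁, y₁, hy₁, rfl⟩ := hu
      induction hv using Submodule.span_induction with
      | mem v hv =>
          obtain ⟨x₂, hx₂, y₂, hy₂, rfl⟩ := hv
          rw [Algebra.TensorProduct.tmul_mul_tmul]
          exact Submodule.subset_span
            ⟨_, SetLike.mul_mem_graded hx₁ hx₂, _, SetLike.mul_mem_graded hy₁ hy₂, rfl⟩
      | zero => rw [mul_zero]; exact Submodule.zero_mem _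
      | add u v _ _ hu hv => rw [mul_add]; exact Submodule.add_mem _ hu hv
      | smul c u _ hu => rw [Algebra.mul_smul_comm]; exact Submodule.smul_mem _ _ hu
  | zero => rw [zero_mul]; exact Submodule.zero_mem _
  | add u v _ _ hu hv => rw [add_mul]; exact Submodule.add_mem _ hu hv
  | smul c u _ hu => rw [Algebra.smul_mul_assoc]; exact Submodule.smul_mem _ _ hu

end MVPaper

namespace MVPaper

set_option linter.unusedSectionVars false

variable {k A : Type} [Field k] [Ring A] [Bialgebra k A]
variable {ι : Type} [AddCommMonoid ι] [DecidableEq ι]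
variable (𝒜 : ι → Submodule k A) [DirectSum.Decomposition 𝒜]

lemma Lset_mul (hdec : ComulDecomposes 𝒜) [SetLike.GradedMonoid 𝒜] {x y : A} {β : ι}
    (hβ : β ∈ Lset 𝒜 (x * y)) : ∃ β₁ ∈ Lset 𝒜 x, ∃ β₂ ∈ Lset 𝒜 y, β = β₁ + β₂ := by
  obtain ⟨δ, hδ⟩ := hβ
  rw [Bialgebra.comul_mul] at hδ
  obtain ⟨S, hS⟩ := hdec x
  obtain ⟨T, hT⟩ := hdec y
  rw [hS, hT, Finset.sum_mul_sum, map_sum] at hδ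
  have : ∃ p ∈ S, ∃ q ∈ T, projT 𝒜 β δ
      ((projT 𝒜 p.1 p.2 (Coalgebra.comul (R := k) x)) *
       (projT 𝒜 q.1 q.2 (Coalgebra.comul (R := k) y))) ≠ 0 := by
    by_contra h
    push_neg at h
    refine hδ ?_
    refine Finset.sum_eq_zero fun p hp => ?_
    rw [map_sum]
    exact Finset.sum_eq_zero fun q hq => h p hp q hq
  obtain ⟨p, _, q, _, hpq⟩ := this
  have hmem : (projT 𝒜 p.1 p.2 (Coalgebra.comul (R := k) x)) *
      (projT 𝒜 q.1 q.2 (Coalgebra.comul (R := k) y)) ∈ subM 𝒜 (p.1 + q.1) (p.2 + q.2) :=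
    mul_mem_subM 𝒜 (projT_mem_subM 𝒜 _ _ _) (projT_mem_subM 𝒜 _ _ _)
  have heq : β = p.1 + q.1 ∧ δ = p.2 + q.2 := by
    by_contra h
    exact hpq (projT_eq_zero_of_mem_subM 𝒜 hmem h)
  have hx : projT 𝒜 p.1 p.2 (Coalgebra.comul (R := k) x) ≠ 0 := by
    intro h; rw [h, zero_mul, map_zero] at hpq; exact hpq rfl
  have hy : projT 𝒜 q.1 q.2 (Coalgebra.comul (R := k) y) ≠ 0 := by
    intro h; rw [h, mul_zero, map_zero] at hpq; exact hpq rfl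
  exact ⟨p.1, ⟨p.2, hx⟩, q.1, ⟨q.2, hy⟩, heq.1⟩

lemma Lset_one [SetLike.GradedMonoid 𝒜] {β : ι} (hβ : β ∈ Lset 𝒜 (1 : A)) : β = 0 := by
  obtain ⟨δ, hδ⟩ := hβ
  rw [Bialgebra.comul_one] at hδ
  have h1 : (1 : A ⊗[k] A) ∈ subM 𝒜 0 0 := by
    rw [Algebra.TensorProduct.one_def]
    exact Submodule.subset_span ⟨_, SetLike.one_mem_graded 𝒜, _, SetLike.one_mem_graded 𝒜, rfl⟩
  by_contra h
  exact hδ (projT_eq_zero_of_mem_subM 𝒜 h1 (by tauto))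

lemma Lset_list_prod (hdec : ComulDecomposes 𝒜) [SetLike.GradedMonoid 𝒜] :
    ∀ {p : ℕ} (g : Fin p → A) {β : ι}, β ∈ Lset 𝒜 (List.ofFn g).prod →
      ∃ B : Fin p → ι, β = ∑ i, B i ∧ ∀ i, B i ∈ Lset 𝒜 (g i) := by
  intro p
  induction p with
  | zero =>
      intro g β hβ
      rw [List.ofFn_zero, List.prod_nil] at hβ
      exact ⟨Fin.elim0, by simpa using (Lset_one 𝒜 hβ), fun i => i.elim0⟩
  | succ p ih =>
      intro g β hβ
      rw [List.ofFn_succ, List.prod_cons] at hβ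
      obtain ⟨β₁, h₁, β₂, h₂, rfl⟩ := Lset_mul 𝒜 hdec hβ
      obtain ⟨B', hB'sum, hB'⟩ := ih (g ∘ Fin.succ) h₂
      refine ⟨Fin.cases β₁ B', ?_, ?_⟩
      · rw [Fin.sum_univ_succ]
        simp [hB'sum]
      · intro i
        refine Fin.cases ?_ ?_ i
        · simpa using h₁
        · intro j; simpa using hB' j

end MVPaper

namespace MVPaper

set_option linter.unusedSectionVars false

variable {k A B : Type} [Field k] [Ring A] [Bialgebra k A] [Ring B] [Bialgebra k B]
variable {ι : Type} [AddCommMonoid ι] [DecidableEq ι]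
variable (𝒜 : ι → Submodule k A) [DirectSum.Decomposition 𝒜]
variable (ℬ : ι → Submodule k B) [DirectSum.Decomposition ℬ]

lemma pair2_tmul (π : A →ₗ[k] Module.Dual k B) (x y : A) (u v : B) :
    pair2 π (x ⊗ₜ[k] y) (u ⊗ₜ[k] v) = π x u * π y v := by
  simp [pair2, TensorProduct.dualDistrib_apply]

/-- If `z ∈ 𝒜 β ⊗ 𝒜 δ` and `u ∈ ℬ τ` with `β ≠ τ` then `⟨z, u ⊗ v⟩ = 0`. -/
lemma pair2_eq_zero_left (π : A →ₗ[k] Module.Dual k B)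
    (hgr : ∀ γ δ : ι, γ ≠ δ → ∀ a ∈ 𝒜 γ, ∀ b ∈ ℬ δ, π a b = 0)
    {β δ τ : ι} (hne : β ≠ τ) {z : A ⊗[k] A} (hz : z ∈ subM 𝒜 β δ)
    {u : B} (hu : u ∈ ℬ τ) (v : B) :
    pair2 π z (u ⊗ₜ[k] v) = 0 := by
  induction hz using Submodule.span_induction with
  | mem z hz =>
      obtain ⟨x, hx, y, hy, rfl⟩ := hz
      rw [pair2_tmul, hgr β τ hne x hx u hu, zero_mul]
  | zero => simp
  | add a b _ _ ha hb => rw [map_add, LinearMap.add_apply, ha, hb, add_zero]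
  | smul c a _ ha => rw [map_smul, LinearMap.smul_apply, ha, smul_zero]

/-- If `w ∈ ℬ β ⊗ ℬ δ` and `x ∈ 𝒜 τ` with `τ ≠ β` then `⟨x ⊗ y, w⟩ = 0`. -/
lemma pair2_eq_zero_right (π : A →ₗ[k] Module.Dual k B)
    (hgr : ∀ γ δ : ι, γ ≠ δ → ∀ a ∈ 𝒜 γ, ∀ b ∈ ℬ δ, π a b = 0)
    {β δ τ : ι} (hne : τ ≠ β) {w : B ⊗[k] B} (hw : w ∈ subM ℬ β δ)
    {x : A} (hx : x ∈ 𝒜 τ) (y : A) :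
    pair2 π (x ⊗ₜ[k] y) w = 0 := by
  induction hw using Submodule.span_induction with
  | mem w hw =>
      obtain ⟨u, hu, v, hv, rfl⟩ := hw
      rw [pair2_tmul, hgr τ β hne x hx u hu, zero_mul]
  | zero => simp
  | add a b _ _ ha hb => rw [map_add, ha, hb, add_zero]
  | smul c a _ ha => rw [map_smul, smul_eq_mul, ha, mul_zero]

/-- If `⟨a₁ a₂, b⟩ ≠ 0` with `a₁` homogeneous of degree `τ`, then `τ ∈ L(b)`. -/
lemma mem_Lset_of_pair_ne_zero_right (π : A →ₗ[k] Module.Dual k B)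
    (hgr : ∀ γ δ : ι, γ ≠ δ → ∀ a ∈ 𝒜 γ, ∀ b ∈ ℬ δ, π a b = 0)
    (hdecB : ComulDecomposes ℬ)
    {a₁ a₂ : A} {b : B} {τ : ι} (ha₁ : a₁ ∈ 𝒜 τ)
    (hmul : π (a₁ * a₂) b = pair2 π (a₁ ⊗ₜ[k] a₂) (Coalgebra.comul (R := k) b))
    (hne : π (a₁ * a₂) b ≠ 0) : τ ∈ Lset ℬ b := by
  by_contra hτ
  obtain ⟨T, hT⟩ := hdecB b
  refine hne ?_
  rw [hmul, hT, map_sum]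
  refine Finset.sum_eq_zero fun q hq => ?_
  by_cases h : q.1 = τ
  · have : projT ℬ q.1 q.2 (Coalgebra.comul (R := k) b) = 0 := by
      subst h
      by_contra h0
      exact hτ ⟨q.2, h0⟩
    rw [this, map_zero]
  · exact pair2_eq_zero_right 𝒜 ℬ π hgr (Ne.symm h) (projT_mem_subM ℬ _ _ _) ha₁ a₂

/-- If `⟨a, b₁ b₂⟩ ≠ 0` with `b₁` homogeneous of degree `τ`, then `τ ∈ L(a)`. -/
lemma mem_Lset_of_pair_ne_zero_left (π : A →ₗ[k] Module.Dual k B)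
    (hgr : ∀ γ δ : ι, γ ≠ δ → ∀ a ∈ 𝒜 γ, ∀ b ∈ ℬ δ, π a b = 0)
    (hdecA : ComulDecomposes 𝒜)
    {a : A} {b₁ b₂ : B} {τ : ι} (hb₁ : b₁ ∈ ℬ τ)
    (hmul : π a (b₁ * b₂) = pair2 π (Coalgebra.comul (R := k) a) (b₁ ⊗ₜ[k] b₂))
    (hne : π a (b₁ * b₂) ≠ 0) : τ ∈ Lset 𝒜 a := by
  by_contra hτ
  obtain ⟨S, hS⟩ := hdecA a
  refine hne ?_
  rw [hmul, hS, map_sum]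
  rw [LinearMap.sum_apply]
  refine Finset.sum_eq_zero fun q hq => ?_
  by_cases h : q.1 = τ
  · have : projT 𝒜 q.1 q.2 (Coalgebra.comul (R := k) a) = 0 := by
      subst h
      by_contra h0
      exact hτ ⟨q.2, h0⟩
    rw [this, map_zero, LinearMap.zero_apply]
  · exact pair2_eq_zero_left 𝒜 ℬ π hgr h (projT_mem_subM 𝒜 _ _ _) hb₁ b₂

end MVPaper

namespace MVPaper

set_option linter.unusedSectionVars false

/-- The linear functional `v ↦ v.2 - c * v.1` on `ℝ²`. -/
def Lf (c : ℝ) (v : ℝ × ℝ) : ℝ := v.2 - c * v.1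

lemma Lf_add (c : ℝ) (v w : ℝ × ℝ) : Lf c (v + w) = Lf c v + Lf c w := by
  simp [Lf]; ring

lemma Lf_sum (c : ℝ) (s : Finset ℕ) (v : ℕ → ℝ × ℝ) :
    Lf c (∑ i ∈ s, v i) = ∑ i ∈ s, Lf c (v i) := by
  classical
  induction s using Finset.induction with
  | empty => simp [Lf]
  | insert _ _ h ih => rw [Finset.sum_insert h, Finset.sum_insert h, Lf_add, ih]

lemma Lf_smul (c : ℝ) (a : ℝ) (v : ℝ × ℝ) : Lf c (a • v) = a * Lf c v := by
  simp [Lf, Prod.smul_fst, Prod.smul_snd, smul_eq_mul]; ring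

lemma sum_max_le (p : ℕ) (f : ℕ → ℝ)
    (hpre : ∀ i j, i ≤ j → j < p → 0 < f j → 0 ≤ f i) :
    ∃ m ≤ p, ∑ i ∈ Finset.range p, max 0 (f i) = ∑ i ∈ Finset.range m, f i := by
  induction p with
  | zero => exact ⟨0, le_refl _, by simp⟩
  | succ p ih =>
      by_cases hfp : 0 < f p
      · refine ⟨p + 1, le_refl _, ?_⟩
        refine Finset.sum_congr rfl fun i hi => ?_
        rw [Finset.mem_range] at hi
        exact max_eq_right (hpre i p (Nat.lt_succ_iff.mp hi) (Nat.lt_succ_self p) hfp)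
      · obtain ⟨m, hm, hsum⟩ := ih fun i j hij hj => hpre i j hij (Nat.lt_succ_of_lt hj)
        refine ⟨m, hm.trans (Nat.le_succ p), ?_⟩
        rw [Finset.sum_range_succ, hsum, max_eq_left (not_lt.mp hfp), add_zero]

lemma sigma_bound (p : ℕ) (γv : ℕ → ℝ × ℝ) (c : ℝ) (j : ℕ) (hj : j ≤ p)
    (hpos : ∀ i, i < j → 0 ≤ Lf c (γv i))
    (hneg : ∀ i, j ≤ i → i < p → Lf c (γv i) ≤ 0) :
    ∀ m, m ≤ p → Lf c (∑ i ∈ Finset.range m, γv i) ≤ Lf c (∑ i ∈ Finset.range j, γv i) := by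
  intro m hm
  rcases le_total m j with h | h
  · have hsplit : ∑ i ∈ Finset.range m, γv i + ∑ i ∈ Finset.Ico m j, γv i
        = ∑ i ∈ Finset.range j, γv i := by
      simp only [Finset.range_eq_Ico]
      exact Finset.sum_Ico_consecutive _ (Nat.zero_le m) h
    have h0 : 0 ≤ ∑ i ∈ Finset.Ico m j, Lf c (γv i) :=
      Finset.sum_nonneg fun i hi => hpos i (Finset.mem_Ico.mp hi).2
    rw [← Lf_sum] at h0
    rw [← hsplit, Lf_add]
    linarith
  · have hsplit : ∑ i ∈ Finset.range j, γv i + ∑ i ∈ Finset.Ico j m, γv i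
        = ∑ i ∈ Finset.range m, γv i := by
      simp only [Finset.range_eq_Ico]
      exact Finset.sum_Ico_consecutive _ (Nat.zero_le j) h
    have h0 : ∑ i ∈ Finset.Ico j m, Lf c (γv i) ≤ 0 :=
      Finset.sum_nonpos fun i hi => hneg i (Finset.mem_Ico.mp hi).1
        (lt_of_lt_of_le (Finset.mem_Ico.mp hi).2 hm)
    rw [← Lf_sum] at h0
    rw [← hsplit, Lf_add]
    linarith

lemma K_convex (p : ℕ) (X : ℝ) (σ : ℕ → ℝ × ℝ) :
    Convex ℝ {v : ℝ × ℝ | 0 ≤ v.1 ∧ v.1 ≤ X ∧ ∀ c : ℝ, ∃ m ≤ p, Lf c v ≤ Lf c (σ m)} := by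
  intro v hv w hw a b ha hb hab
  obtain ⟨hv1, hv2, hv3⟩ := hv
  obtain ⟨hw1, hw2, hw3⟩ := hw
  have hfst : (a • v + b • w).1 = a * v.1 + b * w.1 := by
    simp [Prod.fst_add, Prod.smul_fst, smul_eq_mul]
  refine ⟨?_, ?_, ?_⟩
  · rw [hfst]; positivity
  · rw [hfst]
    calc a * v.1 + b * w.1 ≤ a * X + b * X := by
          gcongr
        _ = X := by rw [← add_mul, hab, one_mul]
  · intro c
    obtain ⟨mv, hmv, hv4⟩ := hv3 c
    obtain ⟨mw, hmw, hw4⟩ := hw3 c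
    have hcomb : Lf c (a • v + b • w) = a * Lf c v + b * Lf c w := by
      rw [Lf_add, Lf_smul, Lf_smul]
    rcases le_total (Lf c (σ mv)) (Lf c (σ mw)) with h | h
    · refine ⟨mw, hmw, ?_⟩
      rw [hcomb]
      calc a * Lf c v + b * Lf c w ≤ a * Lf c (σ mw) + b * Lf c (σ mw) :=
            add_le_add (mul_le_mul_of_nonneg_left (hv4.trans h) ha)
              (mul_le_mul_of_nonneg_left hw4 hb)
          _ = Lf c (σ mw) := by rw [← add_mul, hab, one_mul]
    · refine ⟨mv, hmv, ?_⟩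
      rw [hcomb]
      calc a * Lf c v + b * Lf c w ≤ a * Lf c (σ mv) + b * Lf c (σ mv) :=
            add_le_add (mul_le_mul_of_nonneg_left hv4 ha)
              (mul_le_mul_of_nonneg_left (hw4.trans h) hb)
          _ = Lf c (σ mv) := by rw [← add_mul, hab, one_mul]

end MVPaper

namespace MVPaper

set_option linter.unusedSectionVars false

variable {Γ : AddSubmonoid (ℝ × ℝ)}

/-- Structure of a nonzero degree of slope `μ`. -/
lemma good_of_memSlope (hHP : HalfPlane Γ) {μ : WithTop ℝ} {γ : Γ}
    (h : memSlope μ γ) (hne : (γ : ℝ × ℝ) ≠ 0) :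
    (μ = ⊤ ∧ (γ : ℝ × ℝ).1 = 0 ∧ 0 < (γ : ℝ × ℝ).2) ∨
    (∃ m : ℝ, μ = (m : WithTop ℝ) ∧ 0 < (γ : ℝ × ℝ).1 ∧
      (γ : ℝ × ℝ).2 = m * (γ : ℝ × ℝ).1) := by
  rcases h with h | h
  · exact absurd h hne
  · by_cases h1 : (γ : ℝ × ℝ).1 = 0
    · left
      rcases hHP γ γ.2 with h2 | h2
      · exact absurd h1 (ne_of_gt h2)
      · refine ⟨by rw [← h, slope, if_pos h1], h1, ?_⟩
        rcases lt_or_eq_of_le h2.2 with h3 | h3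
        · exact h3
        · exact absurd (Prod.ext h1 h3.symm) hne
    · right
      refine ⟨(γ : ℝ × ℝ).2 / (γ : ℝ × ℝ).1, by rw [← h, slope, if_neg h1], ?_, ?_⟩
      · rcases hHP γ γ.2 with h2 | h2
        · exact h2
        · exact absurd h2.1 h1
      · rw [div_mul_cancel₀ _ h1]

/-- A left degree of a semistable factor is bounded by the functionals `Lf c`. -/
lemma factor_bound (hHP : HalfPlane Γ) {μ : WithTop ℝ} {γi βi δ : Γ}
    (hγ : memSlope μ γi) (hγne : (γi : ℝ × ℝ) ≠ 0)
    (hβ : memSlopeLE μ βi) (hsum : βi + δ = γi) :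
    0 ≤ (βi : ℝ × ℝ).1 ∧ (βi : ℝ × ℝ).1 ≤ (γi : ℝ × ℝ).1 ∧
      ∀ c : ℝ, Lf c (βi : ℝ × ℝ) ≤ max 0 (Lf c (γi : ℝ × ℝ)) := by
  have hsum' : (βi : ℝ × ℝ) + (δ : ℝ × ℝ) = (γi : ℝ × ℝ) := by
    exact_mod_cast congrArg (fun x : Γ => (x : ℝ × ℝ)) hsum
  have hb1 : 0 ≤ (βi : ℝ × ℝ).1 := by
    rcases hHP βi βi.2 with h | h
    · exact le_of_lt h
    · exact le_of_eq h.1.symm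
  have hd1 : 0 ≤ (δ : ℝ × ℝ).1 := by
    rcases hHP δ δ.2 with h | h
    · exact le_of_lt h
    · exact le_of_eq h.1.symm
  have hble : (βi : ℝ × ℝ).1 ≤ (γi : ℝ × ℝ).1 := by
    have := congrArg Prod.fst hsum'
    simp only [Prod.fst_add] at this
    linarith
  refine ⟨hb1, hble, fun c => ?_⟩
  rcases hβ with hβ0 | hβs
  · simp [Lf, hβ0]
  rcases good_of_memSlope hHP hγ hγne with ⟨htop, hγ1, hγ2⟩ | ⟨m, hm, hγ1, hγ2⟩
  · -- vertical slope: `βi.1 = 0` and `βi.2 ≤ γi.2`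
    have hb10 : (βi : ℝ × ℝ).1 = 0 := le_antisymm (hγ1 ▸ hble) hb1
    have hd10 : (δ : ℝ × ℝ).1 = 0 := by
      have := congrArg Prod.fst hsum'
      simp only [Prod.fst_add] at this
      linarith
    have hd2 : 0 ≤ (δ : ℝ × ℝ).2 := by
      rcases hHP δ δ.2 with h | h
      · exact absurd hd10 (ne_of_gt h)
      · exact h.2
    have hb2 : (βi : ℝ × ℝ).2 ≤ (γi : ℝ × ℝ).2 := by
      have := congrArg Prod.snd hsum'
      simp only [Prod.snd_add] at this
      linarith
    have : Lf c (βi : ℝ × ℝ) ≤ Lf c (γi : ℝ × ℝ) := by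
      simp only [Lf, hb10, hγ1]
      linarith
    exact this.trans (le_max_right _ _)
  · -- finite slope `m`
    have hβ1ne : (βi : ℝ × ℝ).1 ≠ 0 := by
      intro h0
      rw [hm, slope, if_pos h0] at hβs
      exact WithTop.not_top_le_coe m hβs
    have hβ1pos : 0 < (βi : ℝ × ℝ).1 := lt_of_le_of_ne hb1 (Ne.symm hβ1ne)
    have hβ2 : (βi : ℝ × ℝ).2 ≤ m * (βi : ℝ × ℝ).1 := by
      rw [hm, slope, if_neg hβ1ne] at hβs
      have : (βi : ℝ × ℝ).2 / (βi : ℝ × ℝ).1 ≤ m := by exact_mod_cast hβs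
      calc (βi : ℝ × ℝ).2 = ((βi : ℝ × ℝ).2 / (βi : ℝ × ℝ).1) * (βi : ℝ × ℝ).1 := by
            rw [div_mul_cancel₀ _ hβ1ne]
        _ ≤ m * (βi : ℝ × ℝ).1 := mul_le_mul_of_nonneg_right this hb1
    rcases le_total c m with hcm | hcm
    · have : Lf c (βi : ℝ × ℝ) ≤ Lf c (γi : ℝ × ℝ) := by
        simp only [Lf, hγ2]
        nlinarith
      exact this.trans (le_max_right _ _)
    · have : Lf c (βi : ℝ × ℝ) ≤ 0 := by
        simp only [Lf]
        nlinarith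
      exact this.trans (le_max_left _ _)

/-- The key geometric transfer: any point of a set bounded by the staircase
functionals is dominated, at the same abscissa, by a point of the convex hull of
the staircase vertices. -/
lemma upper_transfer (p : ℕ) (γv : ℕ → ℝ × ℝ) (μ : ℕ → WithTop ℝ)
    (hgood : ∀ i, i < p → (μ i = ⊤ ∧ (γv i).1 = 0 ∧ 0 < (γv i).2) ∨
      (∃ m : ℝ, μ i = (m : WithTop ℝ) ∧ 0 < (γv i).1 ∧ (γv i).2 = m * (γv i).1))
    (hanti : ∀ i j, i ≤ j → j < p → μ j ≤ μ i)
    (T : Set (ℝ × ℝ)) (hT : ∀ j, j ≤ p → (∑ i ∈ Finset.range j, γv i) ∈ T)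
    (q : ℝ × ℝ) (hq1 : 0 ≤ q.1) (hq2 : q.1 ≤ (∑ i ∈ Finset.range p, γv i).1)
    (hq3 : ∀ c : ℝ, ∃ m ≤ p, Lf c q ≤ Lf c (∑ i ∈ Finset.range m, γv i)) :
    ∃ q' ∈ convexHull ℝ T, q'.1 = q.1 ∧ q.2 ≤ q'.2 := by
  classical
  set σ : ℕ → ℝ × ℝ := fun m => ∑ i ∈ Finset.range m, γv i with hσ
  have hσ0 : (σ 0).1 = 0 := by simp [hσ]
  have hposgen : ∀ (c : ℝ) i, i < p → (c : WithTop ℝ) ≤ μ i → 0 ≤ Lf c (γv i) := by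
    intro c i hi hc
    rcases hgood i hi with ⟨htop, h1, h2⟩ | ⟨m, hm, h1, h2⟩
    · simp only [Lf, h1]
      linarith
    · rw [hm] at hc
      have hcm : c ≤ m := by exact_mod_cast hc
      simp only [Lf, h2]
      nlinarith
  set P : ℕ → Prop := fun m => (σ m).1 ≤ q.1 with hP
  have hP0 : P 0 := by rw [hP]; simp only [hσ0]; exact hq1
  set j := Nat.findGreatest P p with hj
  have hjle : j ≤ p := Nat.findGreatest_le p
  have hjP : P j := Nat.findGreatest_spec (Nat.zero_le p) hP0
  by_cases hjp : j = p
  · -- `q` sits at the right end of the staircase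
    have hq1' : q.1 = (σ p).1 := le_antisymm hq2 (by rw [← hjp]; exact hjP)
    set c : ℝ := (insert (0 : ℝ) ((Finset.range p).image
      (fun i => (μ i).untopD 0))).min' (Finset.insert_nonempty _ _) with hc
    have hcle : ∀ i, i < p → (c : WithTop ℝ) ≤ μ i := by
      intro i hi
      rcases hgood i hi with ⟨htop, _, _⟩ | ⟨m, hm, _, _⟩
      · rw [htop]; exact le_top
      · rw [hm]
        have h1 : c ≤ (μ i).untopD 0 := by
          refine Finset.min'_le _ _ ?_
          exact Finset.mem_insert_of_mem (Finset.mem_image_of_mem _ (Finset.mem_range.mpr hi))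
        rw [hm, WithTop.untopD_coe] at h1
        exact_mod_cast h1
    have hbound := sigma_bound p γv c p (le_refl p)
      (fun i hi => hposgen c i hi (hcle i hi)) (fun i h1 h2 => absurd h2 (by omega))
    obtain ⟨m, hm, hqm⟩ := hq3 c
    have h2 : Lf c q ≤ Lf c (σ p) := hqm.trans (hbound m hm)
    refine ⟨σ p, subset_convexHull ℝ T (hT p (le_refl p)), hq1'.symm, ?_⟩
    simp only [Lf, hq1'] at h2
    linarith
  · -- `q` sits strictly inside the segment from `σ j` to `σ (j+1)`
    have hjlt : j < p := lt_of_le_of_ne hjle hjp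
    have hnot : ¬ P (j + 1) :=
      Nat.findGreatest_is_greatest (Nat.lt_succ_self j) (Nat.succ_le_of_lt hjlt)
    have hσsucc : σ (j + 1) = σ j + γv j := by
      simp [hσ, Finset.sum_range_succ]
    have hqlt : q.1 < (σ j).1 + (γv j).1 := by
      have := lt_of_not_ge hnot
      rwa [hσsucc, Prod.fst_add] at this
    have hγpos : 0 < (γv j).1 := by
      have : (σ j).1 ≤ q.1 := hjP
      linarith
    rcases hgood j hjlt with ⟨_, h1, _⟩ | ⟨m, hm, h1, h2⟩
    · exact absurd h1 (ne_of_gt hγpos)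
    have hpos : ∀ i, i < j → 0 ≤ Lf m (γv i) := by
      intro i hi
      refine hposgen m i (hi.trans hjlt) ?_
      rw [← hm]
      exact hanti i j (le_of_lt hi) hjlt
    have hneg : ∀ i, j ≤ i → i < p → Lf m (γv i) ≤ 0 := by
      intro i hji hip
      have hle : μ i ≤ (m : WithTop ℝ) := by rw [← hm]; exact hanti j i hji hip
      rcases hgood i hip with ⟨htop, _, _⟩ | ⟨mi, hmi, hi1, hi2⟩
      · rw [htop] at hle
        exact absurd hle (WithTop.not_top_le_coe m)
      · rw [hmi] at hle
        have : mi ≤ m := by exact_mod_cast hle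
        simp only [Lf, hi2]
        nlinarith
    have hbound := sigma_bound p γv m j hjle hpos hneg
    set t : ℝ := (q.1 - (σ j).1) / (γv j).1 with ht
    have ht0 : 0 ≤ t := div_nonneg (by have : (σ j).1 ≤ q.1 := hjP; linarith) (le_of_lt hγpos)
    have ht1 : t ≤ 1 := by
      rw [ht, div_le_one hγpos]
      linarith
    have htmul : t * (γv j).1 = q.1 - (σ j).1 := div_mul_cancel₀ _ (ne_of_gt hγpos)
    refine ⟨σ j + t • γv j, ?_, ?_, ?_⟩
    · refine segment_subset_convexHull (hT j hjle) (hT (j+1) hjlt) ?_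
      refine ⟨1 - t, t, by linarith, ht0, by ring, ?_⟩
      show (1 - t) • σ j + t • σ (j + 1) = σ j + t • γv j
      rw [hσsucc, smul_add, sub_smul, one_smul]
      abel
    · rw [Prod.fst_add, Prod.smul_fst, smul_eq_mul, htmul]
      ring
    · obtain ⟨m', hm', hqm'⟩ := hq3 m
      have h3 : Lf m q ≤ Lf m (σ j) := hqm'.trans (hbound m' hm')
      simp only [Lf] at h3
      rw [Prod.snd_add, Prod.smul_snd, smul_eq_mul, h2]
      have h4 : t * (m * (γv j).1) = m * (q.1 - (σ j).1) := by
        rw [← htmul]; ring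
      linarith
  
end MVPaper

namespace MVPaper

set_option linter.unusedSectionVars false
set_option maxHeartbeats 1000000

lemma Lf_finsum {ι : Type} (c : ℝ) (s : Finset ι) (v : ι → ℝ × ℝ) :
    Lf c (∑ i ∈ s, v i) = ∑ i ∈ s, Lf c (v i) := by
  classical
  induction s using Finset.induction with
  | empty => simp [Lf]
  | insert _ _ h ih => rw [Finset.sum_insert h, Finset.sum_insert h, Lf_add, ih]

lemma filter_sum_eq {M : Type} [AddCommMonoid M] {p : ℕ} (γ : Fin p → M) (γ' : ℕ → M)
    (hγ' : ∀ i : Fin p, γ' i.val = γ i) (j : ℕ) (hj : j ≤ p) :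
    (∑ i ∈ Finset.univ.filter (fun i : Fin p => i.val < j), γ i)
      = ∑ i ∈ Finset.range j, γ' i := by
  classical
  rw [Finset.sum_filter]
  have h1 : ∑ i : Fin p, (if i.val < j then γ i else 0)
      = ∑ i ∈ Finset.range p, (if i < j then γ' i else 0) := by
    rw [← Fin.sum_univ_eq_sum_range (fun i => if i < j then γ' i else 0) p]
    exact Finset.sum_congr rfl fun i _ => by rw [hγ' i]
  rw [h1]
  rw [← Finset.sum_subset (Finset.range_subset_range.mpr hj)
    (fun x _ hx => if_neg (by simpa using hx))]
  exact Finset.sum_congr rfl fun i hi => if_pos (Finset.mem_range.mp hi)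

lemma pair2_flip {k A B : Type} [Field k] [Ring A] [Bialgebra k A] [Ring B] [Bialgebra k B]
    (π : A →ₗ[k] Module.Dual k B) (z : A ⊗[k] A) (w : B ⊗[k] B) :
    pair2 (π.flip) w z = pair2 π z w := by
  induction z with
  | zero => simp
  | tmul x y =>
      induction w with
      | zero => simp
      | tmul u v => rw [pair2_tmul, pair2_tmul]; rfl
      | add w₁ w₂ h1 h2 => rw [map_add, LinearMap.add_apply, h1, h2, map_add]
  | add z₁ z₂ h1 h2 =>
      rw [map_add, map_add, LinearMap.add_apply, h1, h2]

/-- Master transfer lemma: if `a` is an ordered monomial and `⟨a, b⟩ ≠ 0`, then every point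
of `Pol(a)` is dominated, at the same abscissa, by a point of `Pol(b)`. -/
lemma pol_transfer
    {k A B : Type} [Field k] [Ring A] [Bialgebra k A] [Ring B] [Bialgebra k B]
    {Γ : AddSubmonoid (ℝ × ℝ)} [DecidableEq Γ]
    (𝒜 : Γ → Submodule k A) [DirectSum.Decomposition 𝒜] [SetLike.GradedMonoid 𝒜]
    (ℬ : Γ → Submodule k B) [DirectSum.Decomposition ℬ]
    (hHP : HalfPlane Γ)
    (hgrA : ComulGraded 𝒜) (hdecA : ComulDecomposes 𝒜) (hdecB : ComulDecomposes ℬ)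
    (π : A →ₗ[k] Module.Dual k B)
    (hgr : ∀ γ δ : Γ, γ ≠ δ → ∀ x ∈ 𝒜 γ, ∀ y ∈ ℬ δ, π x y = 0)
    (hmulA : ∀ (a₁ a₂ : A) (b : B),
      π (a₁ * a₂) b = pair2 π (a₁ ⊗ₜ[k] a₂) (Coalgebra.comul (R := k) b))
    (a : A) (hom_a : IsOrderedMonomial 𝒜 a) (b : B) (hab : π a b ≠ 0) :
    ∀ v ∈ Pol 𝒜 a, ∃ w ∈ Pol ℬ b, w.1 = v.1 ∧ v.2 ≤ w.2 := by
  classical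
  obtain ⟨p, g, γg, μg, hsemi, hγne, -, hmono, hprod⟩ := hom_a
  set gga : ℕ → Γ := fun i => if h : i < p then γg ⟨i, h⟩ else 0 with hgga
  set μa : ℕ → WithTop ℝ := fun i => if h : i < p then μg ⟨i, h⟩ else ⊤ with hμa
  set γva : ℕ → ℝ × ℝ := fun i => ((gga i : Γ) : ℝ × ℝ) with hγva
  set σΓ : ℕ → Γ := fun m => ∑ i ∈ Finset.range m, gga i with hσΓ
  have hγva_lt : ∀ (i : ℕ) (h : i < p), γva i = ((γg ⟨i, h⟩ : Γ) : ℝ × ℝ) := by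
    intro i h
    rw [hγva, hgga]
    simp only [dif_pos h]
  have hcoe : ∀ m, ((σΓ m : Γ) : ℝ × ℝ) = ∑ i ∈ Finset.range m, γva i := by
    intro m
    rw [hσΓ]
    exact map_sum Γ.subtype _ _
  have hgood : ∀ i, i < p → (μa i = ⊤ ∧ (γva i).1 = 0 ∧ 0 < (γva i).2) ∨
      (∃ m : ℝ, μa i = (m : WithTop ℝ) ∧ 0 < (γva i).1 ∧ (γva i).2 = m * (γva i).1) := by
    intro i h
    have h2 := good_of_memSlope hHP (hsemi ⟨i, h⟩).2.1 (hγne ⟨i, h⟩)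
    rw [hγva_lt i h]
    rw [hμa]
    simp only [dif_pos h]
    exact h2
  have hanti : ∀ i j, i ≤ j → j < p → μa j ≤ μa i := by
    intro i j hij hj
    have hi : i < p := lt_of_le_of_lt hij hj
    rw [hμa]
    simp only [dif_pos hi, dif_pos hj]
    exact hmono (show (⟨i, hi⟩ : Fin p) ≤ ⟨j, hj⟩ from hij)
  -- prefix splits of the monomial
  have hsplit : ∀ j, j ≤ p → ∃ aL aR : A, a = aL * aR ∧ aL ∈ 𝒜 (σΓ j) := by
    intro j hj
    refine ⟨((List.ofFn g).take j).prod, ((List.ofFn g).drop j).prod, ?_, ?_⟩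
    · rw [hprod, List.prod_take_mul_prod_drop]
    · have h1 : ((List.ofFn g).take j).prod ∈ 𝒜 (((List.ofFn γg).take j).sum) := by
        rw [List.ofFn_eq_map (f := g), List.ofFn_eq_map (f := γg), ← List.map_take,
          ← List.map_take]
        exact SetLike.list_prod_map_mem_graded _ _ _ (fun i _ => (hsemi i).1)
      rw [List.sum_take_ofFn] at h1
      have h2 : (∑ i ∈ Finset.univ.filter (fun i : Fin p => i.val < j), γg i) = σΓ j := by
        rw [hσΓ]
        exact filter_sum_eq γg gga (fun i => by rw [hgga]; simp [dif_pos i.isLt]) j hj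
      rwa [h2] at h1
  -- the staircase vertices lie in `L(b)`
  have hLb : ∀ j, j ≤ p → σΓ j ∈ Lset ℬ b := by
    intro j hj
    obtain ⟨aL, aR, hsp, hmem⟩ := hsplit j hj
    refine mem_Lset_of_pair_ne_zero_right 𝒜 ℬ π hgr hdecB hmem (hmulA aL aR b) ?_
    rw [← hsp]
    exact hab
  -- all points of `L(a)` satisfy the staircase functional bounds
  have hposgen : ∀ (c : ℝ) (i : ℕ), i < p → (c : WithTop ℝ) ≤ μa i → 0 ≤ Lf c (γva i) := by
    intro c i hi hc
    rcases hgood i hi with ⟨htop, h1, h2⟩ | ⟨m, hm, h1, h2⟩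
    · simp only [Lf, h1]
      linarith
    · rw [hm] at hc
      have hcm : c ≤ m := by exact_mod_cast hc
      simp only [Lf, h2]
      nlinarith
  have hK : ∀ β ∈ Lset 𝒜 a, 0 ≤ ((β : Γ) : ℝ × ℝ).1 ∧
      ((β : Γ) : ℝ × ℝ).1 ≤ (∑ i ∈ Finset.range p, γva i).1 ∧
      ∀ c : ℝ, ∃ m ≤ p, Lf c ((β : Γ) : ℝ × ℝ) ≤ Lf c (∑ i ∈ Finset.range m, γva i) := by
    intro β hβ
    rw [hprod] at hβ
    obtain ⟨Bf, hBsum, hBmem⟩ := Lset_list_prod 𝒜 hdecA g hβ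
    have hfac : ∀ i : Fin p, 0 ≤ ((Bf i : Γ) : ℝ × ℝ).1 ∧
        ((Bf i : Γ) : ℝ × ℝ).1 ≤ ((γg i : Γ) : ℝ × ℝ).1 ∧
        ∀ c : ℝ, Lf c ((Bf i : Γ) : ℝ × ℝ) ≤ max 0 (Lf c ((γg i : Γ) : ℝ × ℝ)) := by
      intro i
      obtain ⟨δ, hδ⟩ := hBmem i
      have hsum : Bf i + δ = γg i := by
        by_contra hne
        exact hδ (hgrA (γg i) (g i) (hsemi i).1 _ _ hne)
      exact factor_bound hHP (hsemi i).2.1 (hγne i) ((hsemi i).2.2 _ (hBmem i)) hsum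
    have hβcoe : ((β : Γ) : ℝ × ℝ) = ∑ i : Fin p, ((Bf i : Γ) : ℝ × ℝ) := by
      rw [hBsum]
      exact map_sum Γ.subtype _ _
    have hγtot : (∑ i : Fin p, ((γg i : Γ) : ℝ × ℝ)) = ∑ i ∈ Finset.range p, γva i := by
      rw [← Fin.sum_univ_eq_sum_range (fun i => γva i) p]
      exact Finset.sum_congr rfl fun i _ => by rw [hγva_lt i.val i.isLt, Fin.eta]
    refine ⟨?_, ?_, ?_⟩
    · rw [hβcoe, Prod.fst_sum]
      exact Finset.sum_nonneg fun i _ => (hfac i).1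
    · rw [hβcoe, ← hγtot, Prod.fst_sum, Prod.fst_sum]
      exact Finset.sum_le_sum fun i _ => (hfac i).2.1
    · intro c
      have hb1 : Lf c ((β : Γ) : ℝ × ℝ) ≤ ∑ i : Fin p, max 0 (Lf c ((γg i : Γ) : ℝ × ℝ)) := by
        rw [hβcoe, Lf_finsum]
        exact Finset.sum_le_sum fun i _ => (hfac i).2.2 c
      have hb2 : (∑ i : Fin p, max 0 (Lf c ((γg i : Γ) : ℝ × ℝ)))
          = ∑ i ∈ Finset.range p, max 0 (Lf c (γva i)) := by
        rw [← Fin.sum_univ_eq_sum_range (fun i => max 0 (Lf c (γva i))) p]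
        refine Finset.sum_congr rfl fun i _ => ?_
        rw [hγva_lt i.val i.isLt, Fin.eta]
      have hpre : ∀ i j, i ≤ j → j < p → 0 < Lf c (γva j) → 0 ≤ Lf c (γva i) := by
        intro i j hij hj hfj
        have hcj : (c : WithTop ℝ) ≤ μa j := by
          rcases hgood j hj with ⟨htop, h1, h2⟩ | ⟨m', hm', h1, h2⟩
          · rw [htop]; exact le_top
          · rw [hm']
            by_contra hle
            push_neg at hle
            have : m' < c := by exact_mod_cast hle
            simp only [Lf, h2] at hfj
            nlinarith
        exact hposgen c i (lt_of_le_of_lt hij hj) (hcj.trans (hanti i j hij hj))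
      obtain ⟨m, hm, hsum⟩ := sum_max_le p (fun i => Lf c (γva i)) hpre
      refine ⟨m, hm, ?_⟩
      rw [Lf_finsum]
      calc Lf c ((β : Γ) : ℝ × ℝ) ≤ ∑ i ∈ Finset.range p, max 0 (Lf c (γva i)) := by
            rw [← hb2]; exact hb1
        _ = ∑ i ∈ Finset.range m, Lf c (γva i) := hsum
  -- conclude via the convexity transfer
  intro v hv
  have hvK : v ∈ {w : ℝ × ℝ | 0 ≤ w.1 ∧ w.1 ≤ (∑ i ∈ Finset.range p, γva i).1 ∧
      ∀ c : ℝ, ∃ m ≤ p, Lf c w ≤ Lf c (∑ i ∈ Finset.range m, γva i)} := by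
    refine convexHull_min ?_ (K_convex p _ _) hv
    rintro w ⟨β, hβ, rfl⟩
    exact hK β hβ
  obtain ⟨w, hw, hw1, hw2⟩ := upper_transfer p γva μa hgood hanti (Lpts ℬ b)
    (fun j hj => ⟨σΓ j, hLb j hj, hcoe j⟩) v hvK.1 hvK.2.1 hvK.2.2
  exact ⟨w, hw, hw1, hw2⟩

end MVPaper

open MVPaper in
/-- Let `A` be a connected `Γ`-graded bialgebra with finite-dimensional
homogeneous components and `B` its graded dual, with duality pairing `π`.  If `a` and `b`
are ordered monomials in `A` and `B` (of degrees `γa`, `γb`) then `⟨a, b⟩ = 0` unless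
`Pol^∧(a) = Pol^∧(b)`. -/
theorem prop_Duability_pairing
    {k A B : Type} [Field k] [Ring A] [Bialgebra k A] [Ring B] [Bialgebra k B]
    {Γ : AddSubmonoid (ℝ × ℝ)} [DecidableEq Γ]
    (𝒜 : Γ → Submodule k A) [DirectSum.Decomposition 𝒜] [SetLike.GradedMonoid 𝒜]
    (ℬ : Γ → Submodule k B) [DirectSum.Decomposition ℬ] [SetLike.GradedMonoid ℬ]
    (hHP : HalfPlane Γ) (hdisc : DiscreteTopology Γ)
    (hconnA : GradedConnected 𝒜) (hgrA : ComulGraded 𝒜) (hdecA : ComulDecomposes 𝒜)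
    (hconnB : GradedConnected ℬ) (hgrB : ComulGraded ℬ) (hdecB : ComulDecomposes ℬ)
    (hfinA : ∀ γ : Γ, FiniteDimensional k (𝒜 γ))
    (hfinB : ∀ γ : Γ, FiniteDimensional k (ℬ γ))
    (π : A →ₗ[k] Module.Dual k B)
    (hπ : IsGradedBialgebraPairing 𝒜 ℬ π)
    (a : A) (γa : Γ) (ha : a ∈ 𝒜 γa) (hom_a : IsOrderedMonomial 𝒜 a)
    (b : B) (γb : Γ) (hb : b ∈ ℬ γb) (hom_b : IsOrderedMonomial ℬ b)
    (hne : PolWedge 𝒜 a γa ≠ PolWedge ℬ b γb) :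
    π a b = 0 := by
  by_contra hab
  obtain ⟨hgr, -, -, hmulA, hmulB, -⟩ := hπ
  have γab : γa = γb := by
    by_contra h
    exact hab (hgr γa γb h a ha b hb)
  have hgr' : ∀ γ δ : Γ, γ ≠ δ → ∀ y ∈ ℬ γ, ∀ x ∈ 𝒜 δ, π.flip y x = 0 := by
    intro γ δ h y hy x hx
    exact hgr δ γ (Ne.symm h) x hx y hy
  have hmulB' : ∀ (b₁ b₂ : B) (x : A),
      π.flip (b₁ * b₂) x = pair2 π.flip (b₁ ⊗ₜ[k] b₂) (Coalgebra.comul (R := k) x) := by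
    intro b₁ b₂ x
    rw [pair2_flip]
    exact hmulB x b₁ b₂
  have hab' : π.flip b a ≠ 0 := hab
  have transfer1 := pol_transfer 𝒜 ℬ hHP hgrA hdecA hdecB π hgr hmulA a hom_a b hab
  have transfer2 := pol_transfer ℬ 𝒜 hHP hgrB hdecB hdecA π.flip hgr' hmulB' b hom_b a hab'
  refine hne (Set.ext fun pt => ?_)
  constructor
  · rintro ⟨hc, q, hq, h1, h2⟩
    obtain ⟨w, hw, e1, e2⟩ := transfer1 q hq
    exact ⟨γab ▸ hc, w, hw, by rw [e1, h1], h2.trans e2⟩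
  · rintro ⟨hc, q, hq, h1, h2⟩
    obtain ⟨w, hw, e1, e2⟩ := transfer2 q hq
    exact ⟨γab ▸ hc, w, hw, by rw [e1, h1], h2.trans e2⟩
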